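/- Fix L ≥ 2. Define θ: {j ∈ ℕ | j ≥ 1} → {3k | k ≥ 1} by θ(j) = 3j if j ∉ (M_L ∪ (M_L + 1)), θ(j) = 3j + 3 if j ∈ M_L, and θ(j) = 3j − 3 if j ∈ M_L + 1, where M_L := {2^{31} · 3 · k | k ≥ 1, k ∉ P_L} and P_L := {2^p · 3^l | p ∈ ℕ, l < L − 2}. Then θ is a bijection from {j ≥ 1} onto {3k | k ≥ 1}. -/
import Mathlib


open scoped Classical

/-- `P_L := {2^p · 3^l | p ∈ ℕ, l < L − 2}` -/
def PL (L : ℕ) : Set ℕ := {m | ∃ p l : ℕ, l + 2 < L ∧ m = 2 ^ p * 3 ^ l}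

/-- `M_L := {2^31 · 3 · k | k ≥ 1, k ∉ P_L}` -/
def ML (L : ℕ) : Set ℕ := {m | ∃ k : ℕ, 1 ≤ k ∧ k ∉ PL L ∧ m = 2 ^ 31 * 3 * k}

/-- `θ(j) = 3j` if `j ∉ M_L ∪ (M_L+1)`, `3j+3` if `j ∈ M_L`, `3j−3` if `j ∈ M_L+1`. -/
noncomputable def theta (L j : ℕ) : ℕ :=
  if j ∈ ML L then 3 * j + 3
  else if j ∈ (fun m => m + 1) '' ML L then 3 * j - 3
  else 3 * j

noncomputable def sigma (L j : ℕ) : ℕ :=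
  if j ∈ ML L then j + 1
  else if j ∈ (fun m => m + 1) '' ML L then j - 1
  else j

lemma ML_dvd {L m : ℕ} (h : m ∈ ML L) : 3 ∣ m := by
  obtain ⟨k, _, _, rfl⟩ := h
  exact ⟨2 ^ 31 * k, by ring⟩

lemma ML_pos {L m : ℕ} (h : m ∈ ML L) : 1 ≤ m := by
  obtain ⟨k, hk, _, rfl⟩ := h
  exact Nat.mul_pos (by norm_num) hk

lemma succ_not_ML {L m : ℕ} (h : m ∈ ML L) : m + 1 ∉ ML L := by
  intro h'
  obtain ⟨a, rfl⟩ := ML_dvd h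
  obtain ⟨b, hb⟩ := ML_dvd h'
  omega

lemma theta_eq (L j : ℕ) : theta L j = 3 * sigma L j := by
  unfold theta sigma
  split_ifs with h1 h2
  · ring
  · obtain ⟨m, hm, rfl⟩ := h2
    omega
  · rfl

lemma sigma_ML {L m : ℕ} (hm : m ∈ ML L) : sigma L m = m + 1 := if_pos hm

lemma sigma_succ_ML {L m : ℕ} (hm : m ∈ ML L) : sigma L (m + 1) = m := by
  have h2 : m + 1 ∈ (fun m => m + 1) '' ML L := ⟨m, hm, rfl⟩
  unfold sigma
  split_ifs with a b
  · exact absurd a (succ_not_ML hm)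
  · omega

lemma sigma_invol (L j : ℕ) : sigma L (sigma L j) = j := by
  by_cases h1 : j ∈ ML L
  · rw [sigma_ML h1, sigma_succ_ML h1]
  · by_cases h2 : j ∈ (fun m => m + 1) '' ML L
    · obtain ⟨m, hm, rfl⟩ := h2
      rw [sigma_succ_ML hm, sigma_ML hm]
    · have e1 : sigma L j = j := by unfold sigma; rw [if_neg h1, if_neg h2]
      rw [e1, e1]

lemma sigma_pos {L j : ℕ} (h : 1 ≤ j) : 1 ≤ sigma L j := by
  unfold sigma
  split_ifs with h1 h2
  · omega
  · obtain ⟨m, hm, hmj⟩ := h2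
    have := ML_pos hm
    simp only [] at hmj
    omega
  · exact h

/-- `θ` is a bijection from `{j ≥ 1}` onto `{3k | k ≥ 1}`. -/
theorem stmt5 (L : ℕ) (hL : 2 ≤ L) :
    Set.BijOn (theta L) {j : ℕ | 1 ≤ j} {m : ℕ | ∃ k, 1 ≤ k ∧ m = 3 * k} := by
  have hinv : Set.InvOn (fun m => sigma L (m / 3)) (theta L)
      {j : ℕ | 1 ≤ j} {m : ℕ | ∃ k, 1 ≤ k ∧ m = 3 * k} := by
    constructor
    · intro j _
      simp only [theta_eq]
      rw [Nat.mul_div_cancel_left _ (by norm_num), sigma_invol]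
    · rintro m ⟨k, hk, rfl⟩
      simp only [theta_eq]
      rw [Nat.mul_div_cancel_left _ (by norm_num), sigma_invol]
  refine hinv.bijOn ?_ ?_
  · intro j hj
    rw [theta_eq]
    exact ⟨sigma L j, sigma_pos hj, rfl⟩
  · rintro m ⟨k, hk, rfl⟩
    simp only [Set.mem_setOf_eq]
    rw [Nat.mul_div_cancel_left _ (by norm_num)]
    exact sigma_pos hk
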